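/- A partition λ is an ℓ-partition if and only if it satisfies condition (⋆): for all boxes (a,c) and (b,c) in the same column of λ, ℓ divides the hook length h_{(a,c)} if and only if ℓ divides h_{(b,c)}. -/

import Mathlib

/-- The hook length of the box `(a, b)` (0-indexed row `a`, column `b`)
of the Young diagram `μ`: the number of boxes to the right in its row,
plus the number of boxes below in its column, plus one. -/
def hookLen (μ : YoungDiagram) (a b : ℕ) : ℕ :=
  μ.rowLen a + μ.colLen b - a - b - 1

/-- A partition (Young diagram) is an `ℓ`-core when no box has hook length
divisible by `ℓ`. -/
def IsCore (ℓ : ℕ) (μ : YoungDiagram) : Prop :=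
  ∀ a b : ℕ, (a, b) ∈ μ → ¬ ℓ ∣ hookLen μ a b

/-- Two cells are adjacent if they share an edge. -/
def AdjCell (p q : ℕ × ℕ) : Prop :=
  (p.1 = q.1 ∧ (p.2 = q.2 + 1 ∨ q.2 = p.2 + 1)) ∨
  (p.2 = q.2 ∧ (p.1 = q.1 + 1 ∨ q.1 = p.1 + 1))

/-- A finite set of cells is connected if any two of its cells are joined by a
path of edge-adjacent cells inside the set. -/
def ConnectedCells (s : Finset (ℕ × ℕ)) : Prop :=
  ∀ p ∈ s, ∀ q ∈ s,
    Relation.ReflTransGen (fun x y => x ∈ s ∧ y ∈ s ∧ AdjCell x y) p q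

/-- A set of cells contains no 2×2 square. -/
def No2x2 (s : Finset (ℕ × ℕ)) : Prop :=
  ¬ ∃ a b : ℕ, (a, b) ∈ s ∧ (a + 1, b) ∈ s ∧ (a, b + 1) ∈ s ∧ (a + 1, b + 1) ∈ s

/-- `s` is a removable `ℓ`-rim hook of the Young diagram `lam`: a connected set of
`ℓ` cells of `lam`, containing no 2×2 square, whose removal from `lam` leaves the
Young diagram of a partition. -/
def IsRemovableRimHook (ℓ : ℕ) (lam : YoungDiagram) (s : Finset (ℕ × ℕ)) : Prop :=
  ∃ μ : YoungDiagram, μ.cells ⊆ lam.cells ∧ s = lam.cells \ μ.cells ∧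
    s.card = ℓ ∧ ConnectedCells s ∧ No2x2 s

/-- A set of cells all lying in a single row. -/
def HorizontalCells (s : Finset (ℕ × ℕ)) : Prop := ∀ p ∈ s, ∀ q ∈ s, p.1 = q.1

/-- A set of cells all lying in a single column. -/
def VerticalCells (s : Finset (ℕ × ℕ)) : Prop := ∀ p ∈ s, ∀ q ∈ s, p.2 = q.2

/-- Carter's condition (⋆): for all pairs of boxes in the same column of `lam`,
`ℓ` divides one hook length iff it divides the other. -/
def StarCond (ℓ : ℕ) (lam : YoungDiagram) : Prop :=
  ∀ a b c : ℕ, (a, c) ∈ lam → (b, c) ∈ lam →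
    (ℓ ∣ hookLen lam a c ↔ ℓ ∣ hookLen lam b c)

/-- `b` is obtained from `a` by removing a horizontal `ℓ`-rim hook;
equivalently `a` is obtained from `b` by adding a horizontal `ℓ`-rim hook. -/
def RemoveHorizHook (ℓ : ℕ) (a b : YoungDiagram) : Prop :=
  ∃ s, IsRemovableRimHook ℓ a s ∧ HorizontalCells s ∧ b.cells = a.cells \ s

/-- A partition is `ℓ`-regular if it has no `ℓ` equal nonzero parts. -/
def Regular (ℓ : ℕ) (lam : YoungDiagram) : Prop :=
  ∀ i : ℕ, lam.rowLen i = lam.rowLen (i + ℓ - 1) → lam.rowLen i = 0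

/-- An `ℓ`-partition: an `ℓ`-regular partition each of whose removable `ℓ`-rim hooks
is horizontal, and such that this remains true after removing any sequence of
horizontal `ℓ`-rim hooks. -/
def IsEllPartition (ℓ : ℕ) (lam : YoungDiagram) : Prop :=
  Regular ℓ lam ∧
  ∀ μ : YoungDiagram, Relation.ReflTransGen (RemoveHorizHook ℓ) lam μ →
    ∀ s, IsRemovableRimHook ℓ μ s → HorizontalCells s

namespace EllAux

/-- The beta-number (bead) of row `i`. -/
def fb (μ : YoungDiagram) (i : ℕ) : ℤ := (μ.rowLen i : ℤ) - i

/-- `x` is a bead of the Maya diagram of `μ`. -/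
def Bead (μ : YoungDiagram) (x : ℤ) : Prop := ∃ i, x = fb μ i

/-- The gap associated to column `c`. -/
def gp (μ : YoungDiagram) (c : ℕ) : ℤ := (c : ℤ) + 1 - μ.colLen c

theorem fb_strict_anti (μ : YoungDiagram) {i j : ℕ} (h : i < j) : fb μ j < fb μ i := by
  have := μ.rowLen_anti i j (le_of_lt h)
  unfold fb; omega

theorem fb_le_anti (μ : YoungDiagram) {i j : ℕ} (h : i ≤ j) : fb μ j ≤ fb μ i := by
  rcases eq_or_lt_of_le h with rfl | h
  · exact le_refl _
  · exact le_of_lt (fb_strict_anti μ h)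

theorem fb_inj (μ : YoungDiagram) {i j : ℕ} (h : fb μ i = fb μ j) : i = j := by
  rcases lt_trichotomy i j with h' | h' | h'
  · exact absurd h (ne_of_gt (fb_strict_anti μ h'))
  · exact h'
  · exact absurd h (ne_of_lt (fb_strict_anti μ h'))

theorem mem_iff_gp_lt_fb {μ : YoungDiagram} {a c : ℕ} :
    (a, c) ∈ μ ↔ gp μ c < fb μ a := by
  constructor
  · intro h
    have h1 : c < μ.rowLen a := YoungDiagram.mem_iff_lt_rowLen.mp h
    have h2 : a < μ.colLen c := YoungDiagram.mem_iff_lt_colLen.mp h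
    unfold gp fb; omega
  · intro h
    by_contra hmem
    have h1 : μ.rowLen a ≤ c := by
      by_contra h1
      exact hmem (YoungDiagram.mem_iff_lt_rowLen.mpr (by omega))
    have h2 : μ.colLen c ≤ a := by
      by_contra h2
      exact hmem (YoungDiagram.mem_iff_lt_colLen.mpr (by omega))
    unfold gp fb at h; omega

theorem hookLen_eq {μ : YoungDiagram} {a c : ℕ} (h : (a, c) ∈ μ) :
    (hookLen μ a c : ℤ) = fb μ a - gp μ c := by
  have h1 : c < μ.rowLen a := YoungDiagram.mem_iff_lt_rowLen.mp h
  have h2 : a < μ.colLen c := YoungDiagram.mem_iff_lt_colLen.mp h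
  unfold hookLen fb gp; push_cast; omega

theorem bead_or_gap (μ : YoungDiagram) (x : ℤ) : Bead μ x ∨ ∃ c, x = gp μ c := by
  by_cases hx : x ≤ fb μ 0
  · by_cases hb : Bead μ x
    · exact Or.inl hb
    · right
      have hex : ∃ n, fb μ n < x := by
        refine ⟨μ.rowLen 0 + 1 + x.natAbs, ?_⟩
        have h1 : μ.rowLen (μ.rowLen 0 + 1 + x.natAbs) ≤ μ.rowLen 0 :=
          μ.rowLen_anti _ _ (by omega)
        unfold fb; omega
      classical
      let n0 := Nat.find hex
      have hn0 : fb μ n0 < x := Nat.find_spec hex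
      have hn0pos : 0 < n0 := by
        rcases Nat.eq_zero_or_pos n0 with h | h
        · exfalso; rw [h] at hn0; omega
        · exact h
      set i := n0 - 1 with hi
      have hilt : ¬ fb μ i < x := Nat.find_min hex (by omega)
      have hne : x ≠ fb μ i := fun h => hb ⟨i, h⟩
      have hgt : x < fb μ i := by omega
      have hlt : fb μ (i + 1) < x := by
        have : i + 1 = n0 := by omega
        rw [this]; exact hn0
      have hfb1 : (μ.rowLen (i+1) : ℤ) - (i+1) < x := hlt
      have hfb2 : x < (μ.rowLen i : ℤ) - i := hgt
      have hge : (0:ℤ) ≤ x + i := by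
        have : (0:ℤ) ≤ (μ.rowLen (i+1) : ℤ) := by positivity
        omega
      refine ⟨(x + i).toNat, ?_⟩
      have hc : ((x + i).toNat : ℤ) = x + i := Int.toNat_of_nonneg hge
      have hmem : (i, (x + i).toNat) ∈ μ := by
        rw [YoungDiagram.mem_iff_lt_rowLen]; omega
      have hnmem : (i + 1, (x + i).toNat) ∉ μ := by
        rw [YoungDiagram.mem_iff_lt_rowLen]; omega
      have h2 : i < μ.colLen ((x + i).toNat) := YoungDiagram.mem_iff_lt_colLen.mp hmem
      have h3 : μ.colLen ((x + i).toNat) ≤ i + 1 := by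
        by_contra h
        exact hnmem (YoungDiagram.mem_iff_lt_colLen.mpr (by omega))
      have h4 : μ.colLen ((x + i).toNat) = i + 1 := by omega
      unfold gp; rw [h4]; omega
  · right
    refine ⟨(x - 1).toNat, ?_⟩
    have hx0 : (0:ℤ) ≤ μ.rowLen 0 := by positivity
    have hxpos : 1 ≤ x := by unfold fb at hx; omega
    have hcol : μ.colLen ((x-1).toNat) = 0 := by
      by_contra h
      have hm : (0, (x-1).toNat) ∈ μ := YoungDiagram.mem_iff_lt_colLen.mpr (by omega)
      have := YoungDiagram.mem_iff_lt_rowLen.mp hm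
      unfold fb at hx; omega
    unfold gp
    rw [hcol]
    omega

theorem not_bead_gp (μ : YoungDiagram) (c : ℕ) : ¬ Bead μ (gp μ c) := by
  rintro ⟨a, ha⟩
  by_cases h : (a, c) ∈ μ
  · have := mem_iff_gp_lt_fb.mp h; omega
  · have h1 : μ.rowLen a ≤ c := by
      by_contra h1
      exact h (YoungDiagram.mem_iff_lt_rowLen.mpr (by omega))
    have h2 : μ.colLen c ≤ a := by
      by_contra h2
      exact h (YoungDiagram.mem_iff_lt_colLen.mpr (by omega))
    unfold gp fb at ha; omega

theorem gap_iff (μ : YoungDiagram) (x : ℤ) : ¬ Bead μ x ↔ ∃ c, x = gp μ c := by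
  constructor
  · intro h; rcases bead_or_gap μ x with h' | h'
    · exact absurd h' h
    · exact h'
  · rintro ⟨c, rfl⟩; exact not_bead_gp μ c


/-- Bead-level version of Carter's condition. -/
def StarB (ℓ : ℕ) (μ : YoungDiagram) : Prop :=
  ∀ g x y : ℤ, ¬ Bead μ g → Bead μ x → Bead μ y → g < x → g < y →
    ((ℓ : ℤ) ∣ x - g ↔ (ℓ : ℤ) ∣ y - g)

theorem starCond_iff_starB (ℓ : ℕ) (μ : YoungDiagram) :
    StarCond ℓ μ ↔ StarB ℓ μ := by
  constructor
  · intro hs g x y hg hx hy hgx hgy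
    obtain ⟨c, rfl⟩ := (gap_iff μ g).mp hg
    obtain ⟨a, rfl⟩ := hx
    obtain ⟨b, rfl⟩ := hy
    have ha : (a, c) ∈ μ := mem_iff_gp_lt_fb.mpr hgx
    have hb : (b, c) ∈ μ := mem_iff_gp_lt_fb.mpr hgy
    have h1 := hookLen_eq ha
    have h2 := hookLen_eq hb
    have := hs a b c ha hb
    rw [← Int.natCast_dvd_natCast, ← Int.natCast_dvd_natCast (n := hookLen μ b c)] at this
    rw [h1, h2] at this
    exact this
  · intro hs a b c ha hb
    have h1 := hookLen_eq ha
    have h2 := hookLen_eq hb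
    have := hs (gp μ c) (fb μ a) (fb μ b) (not_bead_gp μ c) ⟨a, rfl⟩ ⟨b, rfl⟩
      (mem_iff_gp_lt_fb.mp ha) (mem_iff_gp_lt_fb.mp hb)
    rw [← h1, ← h2, Int.natCast_dvd_natCast, Int.natCast_dvd_natCast] at this
    exact this


/-! ### Row structure of a rim hook -/

structure HookStruct (lam mu : YoungDiagram) (r R : ℕ) : Prop where
  hrR : r ≤ R
  hoff : ∀ i, i < r ∨ R < i → mu.rowLen i = lam.rowLen i
  hmid : ∀ i, r ≤ i → i < R → mu.rowLen i + 1 = lam.rowLen (i+1)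
  hlast : mu.rowLen R < lam.rowLen R

theorem mem_sdiff_iff {lam mu : YoungDiagram} {i j : ℕ} (hle : ∀ i, mu.rowLen i ≤ lam.rowLen i) :
    (i, j) ∈ lam.cells \ mu.cells ↔ mu.rowLen i ≤ j ∧ j < lam.rowLen i := by
  rw [Finset.mem_sdiff, YoungDiagram.mem_cells, YoungDiagram.mem_cells,
    YoungDiagram.mem_iff_lt_rowLen, YoungDiagram.mem_iff_lt_rowLen]
  have := hle i
  omega

namespace HookStruct

variable {lam mu : YoungDiagram} {r R : ℕ}

theorem rowLe (h : HookStruct lam mu r R) : ∀ i, mu.rowLen i ≤ lam.rowLen i := by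
  intro i
  rcases Nat.lt_or_ge i r with hi | hi
  · exact le_of_eq (h.hoff i (Or.inl hi))
  rcases Nat.lt_or_ge R i with hi2 | hi2
  · exact le_of_eq (h.hoff i (Or.inr hi2))
  rcases Nat.lt_or_ge i R with hi3 | hi3
  · have := h.hmid i hi hi3
    have h2 := lam.rowLen_anti i (i+1) (by omega)
    omega
  · have : i = R := by omega
    subst this
    exact le_of_lt h.hlast

theorem cells_sub (h : HookStruct lam mu r R) : mu.cells ⊆ lam.cells := by
  intro p hp
  rw [YoungDiagram.mem_cells] at hp ⊢
  obtain ⟨i, j⟩ := p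
  rw [YoungDiagram.mem_iff_lt_rowLen] at hp ⊢
  exact lt_of_lt_of_le hp (h.rowLe i)

theorem row_range (h : HookStruct lam mu r R) {i j : ℕ}
    (hij : (i, j) ∈ lam.cells \ mu.cells) : r ≤ i ∧ i ≤ R := by
  rw [mem_sdiff_iff h.rowLe] at hij
  by_contra hc
  have : i < r ∨ R < i := by omega
  have := h.hoff i this
  omega

theorem fb_mid (h : HookStruct lam mu r R) {i : ℕ} (h1 : r ≤ i) (h2 : i < R) :
    fb mu i = fb lam (i+1) := by
  have := h.hmid i h1 h2
  unfold fb; push_cast; omega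

theorem fb_off (h : HookStruct lam mu r R) {i : ℕ} (h1 : i < r ∨ R < i) :
    fb mu i = fb lam i := by
  have := h.hoff i h1
  unfold fb; omega

theorem sum_telescope (h : HookStruct lam mu r R) :
    ∀ j, r ≤ j → j ≤ R →
      ((Finset.Icc r j).sum (fun i => (lam.rowLen i : ℤ) - mu.rowLen i))
        = fb lam r - fb mu j := by
  intro j
  induction j with
  | zero =>
    intro h1 h2
    have : r = 0 := by omega
    subst this
    simp [fb]
  | succ j ih =>
    intro h1 h2
    rcases Nat.lt_or_ge r (j+1) with hr | hr
    · have hrj : r ≤ j := by omega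
      rw [Finset.sum_Icc_succ_top (by omega : r ≤ j + 1)]
      rw [ih hrj (by omega)]
      have := h.hmid j hrj (by omega)
      unfold fb; push_cast; omega
    · have : r = j + 1 := by omega
      subst this
      simp [fb]

theorem card_sdiff_eq (h : HookStruct lam mu r R) :
    ((lam.cells \ mu.cells).card : ℤ) = fb lam r - fb mu R := by
  have hdecomp : lam.cells \ mu.cells =
      (Finset.Icc r R).biUnion
        (fun i => ({i} : Finset ℕ) ×ˢ Finset.Ico (mu.rowLen i) (lam.rowLen i)) := by
    ext ⟨i, j⟩
    simp only [Finset.mem_biUnion, Finset.mem_Icc, Finset.mem_product,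
      Finset.mem_singleton, Finset.mem_Ico]
    rw [mem_sdiff_iff h.rowLe]
    constructor
    · intro hij
      have hr := h.row_range ((mem_sdiff_iff h.rowLe).mpr hij)
      exact ⟨i, ⟨hr.1, hr.2⟩, rfl, hij⟩
    · rintro ⟨i', _, rfl, hij⟩
      exact hij
  rw [hdecomp, Finset.card_biUnion]
  · push_cast
    have : ∀ i ∈ Finset.Icc r R,
        ((({i} : Finset ℕ) ×ˢ Finset.Ico (mu.rowLen i) (lam.rowLen i)).card : ℤ)
          = (lam.rowLen i : ℤ) - mu.rowLen i := by
      intro i hi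
      rw [Finset.card_product, Finset.card_singleton, Nat.card_Ico]
      have := h.rowLe i
      push_cast; omega
    rw [Finset.sum_congr rfl this]
    exact h.sum_telescope R h.hrR (le_refl R)
  · intro a _ b _ hab
    simp only [Finset.disjoint_left]
    rintro ⟨i, j⟩ hi hj
    simp only [Finset.mem_product, Finset.mem_singleton] at hi hj
    exact hab (hi.1.symm.trans hj.1)

theorem gap_tl (h : HookStruct lam mu r R) : ¬ Bead lam (fb mu R) := by
  rintro ⟨i, hi⟩
  have h1 : fb mu R < fb lam R := by
    have := h.hlast; unfold fb; omega
  have h2 : fb lam (R+1) < fb mu R := by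
    have ha : lam.rowLen (R+1) = mu.rowLen (R+1) := (h.hoff (R+1) (Or.inr (by omega))).symm
    have hb : mu.rowLen (R+1) ≤ mu.rowLen R := mu.rowLen_anti R (R+1) (by omega)
    unfold fb; push_cast; omega
  rcases Nat.lt_or_ge i (R+1) with hiR | hiR
  · have := fb_le_anti lam (by omega : i ≤ R)
    omega
  · have := fb_le_anti lam hiR
    omega

theorem bead_desc (h : HookStruct lam mu r R) (x : ℤ) :
    Bead mu x ↔ ((Bead lam x ∧ x ≠ fb lam r) ∨ x = fb mu R) := by
  constructor
  · rintro ⟨i, rfl⟩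
    have hrR := h.hrR
    rcases Nat.lt_or_ge i r with hi | hi
    · refine Or.inl ⟨⟨i, h.fb_off (Or.inl hi)⟩, ?_⟩
      rw [h.fb_off (Or.inl hi)]
      exact ne_of_gt (fb_strict_anti lam hi)
    rcases Nat.lt_or_ge R i with hi2 | hi2
    · refine Or.inl ⟨⟨i, h.fb_off (Or.inr hi2)⟩, ?_⟩
      rw [h.fb_off (Or.inr hi2)]
      exact ne_of_lt (fb_strict_anti lam (by omega))
    rcases Nat.lt_or_ge i R with hi3 | hi3
    · refine Or.inl ⟨⟨i+1, h.fb_mid hi hi3⟩, ?_⟩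
      rw [h.fb_mid hi hi3]
      exact ne_of_lt (fb_strict_anti lam (by omega))
    · have : i = R := by omega
      subst this
      exact Or.inr rfl
  · rintro (⟨⟨i, rfl⟩, hne⟩ | rfl)
    · rcases Nat.lt_or_ge i r with hi | hi
      · exact ⟨i, (h.fb_off (Or.inl hi)).symm⟩
      rcases Nat.lt_or_ge R i with hi2 | hi2
      · exact ⟨i, (h.fb_off (Or.inr hi2)).symm⟩
      · have hir : r < i := by
          rcases Nat.lt_or_ge r i with h' | h'
          · exact h'
          · exfalso; exact hne (by rw [le_antisymm h' hi])
        exact ⟨i - 1, by rw [h.fb_mid (by omega) (by omega)]; congr 1; omega⟩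
    · exact ⟨R, rfl⟩

theorem between_iff (h : HookStruct lam mu r R) (w : ℤ)
    (h1 : fb mu R < w) (h2 : w < fb lam r) :
    Bead lam w ↔ ∃ i, r < i ∧ i ≤ R ∧ w = fb lam i := by
  constructor
  · rintro ⟨i, rfl⟩
    refine ⟨i, ?_, ?_, rfl⟩
    · by_contra hc
      have := fb_le_anti lam (by omega : i ≤ r)
      omega
    · by_contra hc
      have h3 : fb lam (R+1) < fb mu R := by
        have ha : lam.rowLen (R+1) = mu.rowLen (R+1) := (h.hoff (R+1) (Or.inr (by omega))).symm
        have hb : mu.rowLen (R+1) ≤ mu.rowLen R := mu.rowLen_anti R (R+1) (by omega)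
        unfold fb; push_cast; omega
      have := fb_le_anti lam (by omega : R + 1 ≤ i)
      omega
  · rintro ⟨i, _, _, rfl⟩
    exact ⟨i, rfl⟩

end HookStruct


/-! ### Classification of removable rim hooks -/

theorem adj_row_diff {p q : ℕ × ℕ} (h : AdjCell p q) : q.1 ≤ p.1 + 1 ∧ p.1 ≤ q.1 + 1 := by
  rcases h with ⟨h1, _⟩ | ⟨_, h2 | h2⟩ <;> omega

theorem adj_vert {p q : ℕ × ℕ} (h : AdjCell p q) (hne : p.1 ≠ q.1) : p.2 = q.2 := by
  rcases h with ⟨h1, _⟩ | ⟨h2, _⟩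
  · exact absurd h1 hne
  · exact h2

theorem path_row_exists {s : Finset (ℕ × ℕ)} {p q : ℕ × ℕ} (hp : p ∈ s)
    (h : Relation.ReflTransGen (fun x y => x ∈ s ∧ y ∈ s ∧ AdjCell x y) p q) :
    ∀ i, p.1 ≤ i → i ≤ q.1 → ∃ c, (i, c) ∈ s := by
  induction h with
  | refl =>
    intro i h1 h2
    have : i = p.1 := by omega
    subst this
    exact ⟨p.2, by rwa [Prod.mk.eta]⟩
  | tail _ hbc ih =>
    rename_i b c _
    intro i h1 h2
    rcases le_or_gt i b.1 with hib | hib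
    · exact ih i h1 hib
    · have hd := adj_row_diff hbc.2.2
      have : i = c.1 := by omega
      subst this
      exact ⟨c.2, by rw [Prod.mk.eta]; exact hbc.2.1⟩

theorem path_cross {s : Finset (ℕ × ℕ)} {p q : ℕ × ℕ} {i : ℕ}
    (h : Relation.ReflTransGen (fun x y => x ∈ s ∧ y ∈ s ∧ AdjCell x y) p q)
    (hp : p.1 ≤ i) (hq : i + 1 ≤ q.1) : ∃ c, (i, c) ∈ s ∧ (i + 1, c) ∈ s := by
  induction h with
  | refl => omega
  | tail _ hbc ih =>
    rename_i b c _
    rcases le_or_gt (i+1) b.1 with hib | hib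
    · exact ih hib
    · have hd := adj_row_diff hbc.2.2
      have hb1 : b.1 = i := by omega
      have hc1 : c.1 = i + 1 := by omega
      have hv : b.2 = c.2 := adj_vert hbc.2.2 (by omega)
      refine ⟨b.2, ?_, ?_⟩
      · rw [← hb1, Prod.mk.eta]; exact hbc.1
      · rw [hv, ← hc1, Prod.mk.eta]; exact hbc.2.1

theorem sub_rowLe {lam mu : YoungDiagram} (hsub : mu.cells ⊆ lam.cells) :
    ∀ i, mu.rowLen i ≤ lam.rowLen i := by
  intro i
  by_contra hc
  have h1 : (i, lam.rowLen i) ∈ mu := YoungDiagram.mem_iff_lt_rowLen.mpr (by omega)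
  have h2 := hsub ((YoungDiagram.mem_cells _).mpr h1)
  rw [YoungDiagram.mem_cells, YoungDiagram.mem_iff_lt_rowLen] at h2
  omega

theorem classify {l : ℕ} (hl : 1 ≤ l) {lam : YoungDiagram} {s : Finset (ℕ × ℕ)}
    (h : IsRemovableRimHook l lam s) :
    ∃ (mu : YoungDiagram) (r R : ℕ), HookStruct lam mu r R ∧ mu.cells = lam.cells \ s ∧
      fb mu R = fb lam r - l ∧ (HorizontalCells s ↔ r = R) := by
  obtain ⟨mu, hsub, hs, hcard, hconn, h2x2⟩ := h
  have hle := sub_rowLe hsub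
  have memS : ∀ i j : ℕ, (i, j) ∈ s ↔ mu.rowLen i ≤ j ∧ j < lam.rowLen i := by
    intro i j
    rw [hs]
    exact mem_sdiff_iff hle
  set T : Finset ℕ := (Finset.range (lam.colLen 0)).filter
    (fun i => mu.rowLen i < lam.rowLen i) with hT
  have memT : ∀ i, i ∈ T ↔ mu.rowLen i < lam.rowLen i := by
    intro i
    rw [hT, Finset.mem_filter, Finset.mem_range]
    constructor
    · exact fun h => h.2
    · intro h
      refine ⟨?_, h⟩
      rw [← YoungDiagram.mem_iff_lt_colLen, YoungDiagram.mem_iff_lt_rowLen]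
      omega
  have hsne : s.Nonempty := Finset.card_pos.mp (by omega)
  obtain ⟨⟨i0, j0⟩, hp0⟩ := hsne
  have hTne : T.Nonempty := by
    refine ⟨i0, (memT i0).mpr ?_⟩
    have := (memS i0 j0).mp hp0
    omega
  set r := T.min' hTne with hr
  set R := T.max' hTne with hR
  have hrR : r ≤ R := T.min'_le _ (T.max'_mem hTne)
  have hrT : mu.rowLen r < lam.rowLen r := (memT r).mp (T.min'_mem hTne)
  have hRT : mu.rowLen R < lam.rowLen R := (memT R).mp (T.max'_mem hTne)
  have hcell : ∀ i, mu.rowLen i < lam.rowLen i → (i, mu.rowLen i) ∈ s := by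
    intro i hi
    rw [memS]; omega
  -- contiguity
  have hcontig : ∀ i, r ≤ i → i ≤ R → mu.rowLen i < lam.rowLen i := by
    intro i h1 h2
    have hpath := hconn _ (hcell r hrT) _ (hcell R hRT)
    obtain ⟨c, hc⟩ := path_row_exists (hcell r hrT) hpath i h1 h2
    have := (memS i c).mp hc
    omega
  have hoff : ∀ i, i < r ∨ R < i → mu.rowLen i = lam.rowLen i := by
    intro i hi
    have hniT : i ∉ T := by
      intro hiT
      rcases hi with hi | hi
      · exact absurd (T.min'_le i hiT) (by omega)
      · exact absurd (T.le_max' i hiT) (by omega)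
    rw [memT] at hniT
    have := hle i
    omega
  have hmid : ∀ i, r ≤ i → i < R → mu.rowLen i + 1 = lam.rowLen (i+1) := by
    intro i h1 h2
    have hi1 : mu.rowLen i < lam.rowLen i := hcontig i h1 (by omega)
    have hi2 : mu.rowLen (i+1) < lam.rowLen (i+1) := hcontig (i+1) (by omega) (by omega)
    have hpath := hconn _ (hcell i hi1) _ (hcell (i+1) hi2)
    obtain ⟨c, hc1, hc2⟩ := path_cross hpath (le_refl i) (le_refl (i+1))
    rw [memS] at hc1 hc2
    have hup : mu.rowLen i < lam.rowLen (i+1) := by omega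
    have hdown : lam.rowLen (i+1) ≤ mu.rowLen i + 1 := by
      by_contra hcon
      refine h2x2 ⟨i, mu.rowLen i, ?_, ?_, ?_, ?_⟩ <;> rw [memS]
      · have := lam.rowLen_anti i (i+1) (by omega); omega
      · have := mu.rowLen_anti i (i+1) (by omega); omega
      · have := lam.rowLen_anti i (i+1) (by omega); omega
      · have := mu.rowLen_anti i (i+1) (by omega); omega
    omega
  have hstruct : HookStruct lam mu r R := ⟨hrR, hoff, hmid, hRT⟩
  refine ⟨mu, r, R, hstruct, ?_, ?_, ?_⟩
  · rw [hs, Finset.sdiff_sdiff_eq_self hsub]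
  · have := hstruct.card_sdiff_eq
    rw [← hs, hcard] at this
    omega
  · constructor
    · intro hhoriz
      have h1 := hhoriz _ (hcell r hrT) _ (hcell R hRT)
      exact h1
    · intro hreq p hp q hq
      obtain ⟨pi, pj⟩ := p
      obtain ⟨qi, qj⟩ := q
      have h1 := hstruct.row_range (hs ▸ hp)
      have h2 := hstruct.row_range (hs ▸ hq)
      simp only
      omega


/-! ### Construction of a removable rim hook from a bead/gap pair -/

theorem adjCell_symm : Symmetric AdjCell := by
  intro p q h
  rcases h with ⟨h1, h2⟩ | ⟨h1, h2⟩
  · exact Or.inl ⟨h1.symm, h2.symm⟩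
  · exact Or.inr ⟨h1.symm, h2.symm⟩

theorem rel_symm (s : Finset (ℕ × ℕ)) :
    Symmetric (fun x y => x ∈ s ∧ y ∈ s ∧ AdjCell x y) := by
  intro p q ⟨h1, h2, h3⟩
  exact ⟨h2, h1, adjCell_symm h3⟩

theorem walk_row {s : Finset (ℕ × ℕ)} (i lo hi : ℕ)
    (hint : ∀ j, lo ≤ j → j ≤ hi → (i, j) ∈ s) :
    ∀ b, lo ≤ b → b ≤ hi →
      Relation.ReflTransGen (fun x y => x ∈ s ∧ y ∈ s ∧ AdjCell x y) (i, b) (i, lo) := by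
  intro b
  induction b with
  | zero =>
    intro h1 h2
    have : lo = 0 := by omega
    subst this
    exact Relation.ReflTransGen.refl
  | succ b ih =>
    intro h1 h2
    rcases Nat.lt_or_ge lo (b+1) with h3 | h3
    · refine Relation.ReflTransGen.head ?_ (ih (by omega) (by omega))
      exact ⟨hint _ (by omega) (by omega), hint _ (by omega) (by omega),
        Or.inl ⟨rfl, Or.inl rfl⟩⟩
    · have : lo = b + 1 := by omega
      subst this
      exact Relation.ReflTransGen.refl

theorem construct {l : ℕ} (hl : 1 ≤ l) (lam : YoungDiagram) (r : ℕ)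
    (hgap : ¬ Bead lam (fb lam r - l)) :
    ∃ (mu : YoungDiagram) (R : ℕ) (s : Finset (ℕ × ℕ)),
      HookStruct lam mu r R ∧ fb mu R = fb lam r - l ∧
      s = lam.cells \ mu.cells ∧ mu.cells = lam.cells \ s ∧
      IsRemovableRimHook l lam s ∧ (HorizontalCells s ↔ r = R) := by
  classical
  set t := fb lam r with ht
  -- find R
  have hex : ∃ n, fb lam (n+1) < t - l := by
    refine ⟨lam.rowLen 0 + (t - l).natAbs, ?_⟩
    have h1 : lam.rowLen (lam.rowLen 0 + (t - l).natAbs + 1) ≤ lam.rowLen 0 :=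
      lam.rowLen_anti _ _ (by omega)
    unfold fb; omega
  set R := Nat.find hex with hRdef
  have hR1 : fb lam (R+1) < t - l := Nat.find_spec hex
  have hR2 : ∀ i, i ≤ R → t - l < fb lam i := by
    intro i hi
    have hne : t - l ≠ fb lam i := fun h => hgap ⟨i, h⟩
    rcases Nat.eq_zero_or_pos i with rfl | hipos
    · have h0 : fb lam r ≤ fb lam 0 := fb_le_anti lam (Nat.zero_le r)
      rcases lt_or_eq_of_le h0 with h | h
      · have : (0:ℤ) < l := by exact_mod_cast hl
        omega
      · have : (0:ℤ) < l := by exact_mod_cast hl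
        omega
    · have := Nat.find_min hex (m := i - 1) (by omega)
      have hieq : i - 1 + 1 = i := by omega
      rw [hieq] at this
      omega
  have hrR : r ≤ R := by
    by_contra hc
    have := fb_le_anti lam (by omega : R + 1 ≤ r)
    have : (0:ℤ) < l := by exact_mod_cast hl
    omega
  have htR : t - l < fb lam R := hR2 R (le_refl R)
  -- positivity of middle rows
  have hpos : ∀ i, r ≤ i → i < R → 1 ≤ lam.rowLen (i+1) := by
    intro i h1 h2
    by_contra hc
    have hz : lam.rowLen (i+1) = 0 := by omega
    have hk0 : t - l < -(i+1 : ℤ) := by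
      have := hR2 (i+1) (by omega)
      unfold fb at this; omega
    set k := (-(t - l)).toNat with hk
    have hkk : (k : ℤ) = -(t - l) := Int.toNat_of_nonneg (by omega)
    have hki : i + 1 ≤ k := by omega
    have hrk : lam.rowLen k = 0 := by
      have := lam.rowLen_anti (i+1) k hki
      omega
    refine hgap ⟨k, ?_⟩
    unfold fb
    rw [hrk]
    omega
  -- the new row-length function
  set wfun : ℕ → ℕ := fun i =>
    if i < r then lam.rowLen i else if i < R then lam.rowLen (i+1) - 1
    else if i = R then (t - l + R).toNat else lam.rowLen i with hwfun
  have hwR0 : ((t - l + R).toNat : ℤ) = t - l + R := by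
    have h1 : (lam.rowLen (R+1) : ℤ) - (R+1) < t - l := hR1
    have h2 : (0:ℤ) ≤ lam.rowLen (R+1) := by positivity
    exact Int.toNat_of_nonneg (by omega)
  have wA : ∀ i, i < r → wfun i = lam.rowLen i := by
    intro i h; simp only [hwfun]; rw [if_pos h]
  have wB : ∀ i, r ≤ i → i < R → wfun i = lam.rowLen (i+1) - 1 := by
    intro i h1 h2; simp only [hwfun]; rw [if_neg (by omega), if_pos h2]
  have wC : wfun R = (t - l + R).toNat := by
    simp only [hwfun]; rw [if_neg (by omega), if_neg (by omega)]; simp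
  have wD : ∀ i, R < i → wfun i = lam.rowLen i := by
    intro i h; simp only [hwfun]; rw [if_neg (by omega), if_neg (by omega), if_neg (by omega)]
  have hwle : ∀ i, wfun i ≤ lam.rowLen i := by
    intro i
    rcases Nat.lt_or_ge i r with h | h
    · rw [wA i h]
    rcases Nat.lt_or_ge i R with h2 | h2
    · rw [wB i h h2]
      have := lam.rowLen_anti i (i+1) (by omega)
      omega
    rcases Nat.lt_or_ge R i with h3 | h3
    · rw [wD i h3]
    · have : i = R := by omega
      subst this
      rw [wC]
      unfold fb at htR
      omega
  have hwlt : ∀ i, r ≤ i → i ≤ R → wfun i < lam.rowLen i := by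
    intro i h1 h2
    rcases Nat.lt_or_ge i R with h3 | h3
    · rw [wB i h1 h3]
      have hp := hpos i h1 h3
      have := lam.rowLen_anti i (i+1) (by omega)
      omega
    · have : i = R := by omega
      subst this
      rw [wC]
      unfold fb at htR
      omega
  have hstep : ∀ i, wfun (i+1) ≤ wfun i := by
    intro i
    rcases Nat.lt_or_ge (i+1) r with h | h
    · rw [wA _ h, wA _ (by omega)]
      exact lam.rowLen_anti i (i+1) (by omega)
    rcases Nat.lt_or_ge (i+1) R with h2 | h2
    · -- i+1 in [?, R)
      rw [wB _ h h2]
      rcases Nat.lt_or_ge i r with h3 | h3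
      · rw [wA _ h3]
        have := lam.rowLen_anti i (i+1+1) (by omega)
        omega
      · rw [wB _ h3 (by omega)]
        have := lam.rowLen_anti (i+1) (i+1+1) (by omega)
        omega
    rcases Nat.lt_or_ge R (i+1) with h3 | h3
    · -- i+1 > R
      rw [wD _ h3]
      rcases Nat.lt_or_ge i r with h4 | h4
      · rw [wA _ h4]; exact lam.rowLen_anti i (i+1) (by omega)
      rcases Nat.lt_or_ge i R with h5 | h5
      · rw [wB _ h4 h5]
        have h6 : i + 1 = R := by omega
        exfalso; omega
      rcases Nat.lt_or_ge R i with h6 | h6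
      · rw [wD _ h6]; exact lam.rowLen_anti i (i+1) (by omega)
      · have : i = R := by omega
        subst this
        rw [wC]
        have : (lam.rowLen (R+1) : ℤ) - (R+1) < t - l := hR1
        omega
    · -- i+1 = R
      have hiR : i + 1 = R := by omega
      rw [hiR, wC]
      rcases Nat.lt_or_ge i r with h4 | h4
      · rw [wA _ h4]
        have : t - l < (lam.rowLen R : ℤ) - R := htR
        have := lam.rowLen_anti i R (by omega)
        omega
      · rw [wB _ h4 (by omega), hiR]
        have : t - l < (lam.rowLen R : ℤ) - R := htR
        omega
  have hwanti : Antitone wfun := antitone_nat_of_succ_le hstep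
  -- build mu
  set mu : YoungDiagram :=
    ⟨lam.cells.filter (fun p => p.2 < wfun p.1), by
      intro a b hba ha
      simp only [Finset.coe_filter, Set.mem_setOf_eq] at ha ⊢
      refine ⟨lam.isLowerSet hba ha.1, ?_⟩
      have h1 := hwanti (hba.1 : b.1 ≤ a.1)
      have h2 : b.2 ≤ a.2 := hba.2
      omega⟩ with hmu
  have hmem_mu : ∀ i j : ℕ, (i, j) ∈ mu ↔ j < wfun i := by
    intro i j
    constructor
    · intro hmem
      have : (i,j) ∈ mu.cells := (YoungDiagram.mem_cells _).mpr hmem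
      simp only [hmu, Finset.mem_filter] at this
      exact this.2
    · intro hj
      have hlam : (i, j) ∈ lam := YoungDiagram.mem_iff_lt_rowLen.mpr (by
        have := hwle i; omega)
      rw [← YoungDiagram.mem_cells]
      simp only [hmu, Finset.mem_filter]
      exact ⟨(YoungDiagram.mem_cells _).mp hlam, hj⟩
  have hrowlen : ∀ i, mu.rowLen i = wfun i := by
    intro i
    have h1 : mu.rowLen i ≤ wfun i := by
      by_contra hc
      have : (i, wfun i) ∈ mu := YoungDiagram.mem_iff_lt_rowLen.mpr (by omega)
      have := (hmem_mu i (wfun i)).mp this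
      omega
    have h2 : wfun i ≤ mu.rowLen i := by
      by_contra hc
      have : (i, mu.rowLen i) ∈ mu := (hmem_mu i _).mpr (by omega)
      have := YoungDiagram.mem_iff_lt_rowLen.mp this
      omega
    omega
  have hstruct : HookStruct lam mu r R := by
    refine ⟨hrR, ?_, ?_, ?_⟩
    · intro i hi
      rw [hrowlen i]
      rcases hi with hi | hi
      · exact wA i hi
      · exact wD i hi
    · intro i h1 h2
      rw [hrowlen i, wB i h1 h2]
      have := hpos i h1 h2
      omega
    · rw [hrowlen R]
      exact hwlt R hrR (le_refl R)
  have hfbmuR : fb mu R = t - l := by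
    unfold fb
    rw [hrowlen R, wC]
    omega
  set s : Finset (ℕ × ℕ) := lam.cells \ mu.cells with hs
  have memS : ∀ i j : ℕ, (i, j) ∈ s ↔ wfun i ≤ j ∧ j < lam.rowLen i := by
    intro i j
    rw [hs, mem_sdiff_iff hstruct.rowLe, hrowlen i]
  have hscard : s.card = l := by
    have h1 := hstruct.card_sdiff_eq
    rw [hfbmuR] at h1
    rw [hs]
    omega
  -- connectivity
  have hanchor : (R, wfun R) ∈ s := (memS R (wfun R)).mpr ⟨le_refl _, hwlt R hrR (le_refl R)⟩
  have hrowint : ∀ i j, r ≤ i → i ≤ R → wfun i ≤ j → j < lam.rowLen i → (i, j) ∈ s := by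
    intro i j _ _ h3 h4
    exact (memS i j).mpr ⟨h3, h4⟩
  have htoAnchor : ∀ d i j, i + d = R → r ≤ i → (i, j) ∈ s →
      Relation.ReflTransGen (fun x y => x ∈ s ∧ y ∈ s ∧ AdjCell x y) (i, j) (R, wfun R) := by
    intro d
    induction d with
    | zero =>
      intro i j hiR hri hij
      obtain rfl : i = R := by omega
      have hj := (memS R j).mp hij
      exact walk_row R (wfun R) j (fun j' ha hb => (memS R j').mpr ⟨ha, by omega⟩) j hj.1 (le_refl j)
    | succ d ih =>
      intro i j hiR hri hij
      have hiR' : i < R := by omega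
      have hj := (memS i j).mp hij
      have hw : (i, wfun i) ∈ s := (memS i (wfun i)).mpr ⟨le_refl _, by omega⟩
      have hwB := wB i hri hiR'
      have hdown : (i+1, wfun i) ∈ s := by
        refine (memS (i+1) (wfun i)).mpr ⟨hstep i, ?_⟩
        have := hpos i hri hiR'
        omega
      have hpath1 := walk_row i (wfun i) j (fun j' ha hb => (memS i j').mpr ⟨ha, by omega⟩) j hj.1 (le_refl j)
      refine Relation.ReflTransGen.trans hpath1 ?_
      refine Relation.ReflTransGen.head ⟨hw, hdown, Or.inr ⟨rfl, Or.inr rfl⟩⟩ ?_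
      exact ih (i+1) (wfun i) (by omega) (by omega) hdown
  have hconn : ConnectedCells s := by
    intro p hp q hq
    obtain ⟨pi, pj⟩ := p
    obtain ⟨qi, qj⟩ := q
    have hpr := hstruct.row_range (hs ▸ hp)
    have hqr := hstruct.row_range (hs ▸ hq)
    have h1 := htoAnchor (R - pi) pi pj (by omega) hpr.1 hp
    have h2 := htoAnchor (R - qi) qi qj (by omega) hqr.1 hq
    exact Relation.ReflTransGen.trans h1
      ((@Relation.ReflTransGen.symmetric _ (fun x y => x ∈ s ∧ y ∈ s ∧ AdjCell x y) ⟨fun a b h => rel_symm s h⟩).symm _ _ h2)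
  -- no 2x2
  have h2x2 : No2x2 s := by
    rintro ⟨a, b, h1, h2, h3, h4⟩
    have ha1 := hstruct.row_range (hs ▸ h2)
    have ha2 := hstruct.row_range (hs ▸ h1)
    have haR : a < R := by omega
    have hwBa := wB a ha2.1 haR
    have hb1 := (memS a b).mp h1
    have hb4 := (memS (a+1) (b+1)).mp h4
    have := hpos a ha2.1 haR
    omega
  refine ⟨mu, R, s, hstruct, hfbmuR, rfl, ?_, ?_, ?_⟩
  · rw [hs, Finset.sdiff_sdiff_eq_self hstruct.cells_sub]
  · exact ⟨mu, hstruct.cells_sub, rfl, hscard, hconn, h2x2⟩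
  · constructor
    · intro hhoriz
      have hcr : (r, wfun r) ∈ s := (memS r (wfun r)).mpr ⟨le_refl _, hwlt r (le_refl r) hrR⟩
      exact hhoriz _ hcr _ hanchor
    · intro hreq p hp q hq
      obtain ⟨pi, pj⟩ := p
      obtain ⟨qi, qj⟩ := q
      have h1 := hstruct.row_range (hs ▸ hp)
      have h2 := hstruct.row_range (hs ▸ hq)
      simp only
      omega


/-! ### Packaged bridge lemmas -/

theorem no_between_iff {l : ℕ} (hl : 1 ≤ l) {lam mu : YoungDiagram} {r R : ℕ}
    (h : HookStruct lam mu r R) (hfb : fb mu R = fb lam r - l) :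
    (r = R) ↔ ∀ w : ℤ, fb lam r - l < w → w < fb lam r → ¬ Bead lam w := by
  constructor
  · intro hrR w h1 h2 hw
    rw [← hfb] at h1
    obtain ⟨i, hi1, hi2, _⟩ := (h.between_iff w h1 h2).mp hw
    omega
  · intro hall
    by_contra hne
    have hrR : r < R := lt_of_le_of_ne h.hrR hne
    refine hall (fb lam (r+1)) ?_ (fb_strict_anti lam (by omega)) ⟨r+1, rfl⟩
    have h1 : fb mu R < fb lam R := by
      have := h.hlast; unfold fb; omega
    have h2 : fb lam R ≤ fb lam (r+1) := fb_le_anti lam (by omega)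
    omega

/-- Complete data of a removable rim hook, bead-level. -/
theorem hook_classify {l : ℕ} (hl : 1 ≤ l) {lam : YoungDiagram} {s : Finset (ℕ × ℕ)}
    (h : IsRemovableRimHook l lam s) :
    ∃ t : ℤ, Bead lam t ∧ ¬ Bead lam (t - l) ∧
      (HorizontalCells s ↔ ∀ w : ℤ, t - l < w → w < t → ¬ Bead lam w) ∧
      ∀ nu : YoungDiagram, nu.cells = lam.cells \ s →
        ((∀ x, Bead nu x ↔ ((Bead lam x ∧ x ≠ t) ∨ x = t - l)) ∧
          nu.cells.card + l = lam.cells.card) := by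
  obtain ⟨mu, r, R, hstruct, hmucells, hfb, hhoriz⟩ := classify hl h
  refine ⟨fb lam r, ⟨r, rfl⟩, ?_, ?_, ?_⟩
  · rw [← hfb]; exact hstruct.gap_tl
  · rw [hhoriz]; exact no_between_iff hl hstruct hfb
  · intro nu hnu
    have heq : nu = mu := by
      ext p
      rw [hnu, hmucells]
    subst heq
    constructor
    · intro x
      rw [hstruct.bead_desc x, hfb]
    · obtain ⟨mu', hsub', hs', hcard', _, _⟩ := h
      have hmu' : nu = mu' := by
        ext p
        rw [hnu, hs', Finset.sdiff_sdiff_eq_self hsub']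
      subst hmu'
      have := Finset.card_sdiff_add_card_eq_card hsub'
      rw [← hs'] at this
      omega

/-- From a bead/gap pair, a removable rim hook exists. -/
theorem hook_construct {l : ℕ} (hl : 1 ≤ l) {lam : YoungDiagram} {t : ℤ}
    (hb : Bead lam t) (hg : ¬ Bead lam (t - l)) :
    ∃ s : Finset (ℕ × ℕ), IsRemovableRimHook l lam s ∧
      (HorizontalCells s ↔ ∀ w : ℤ, t - l < w → w < t → ¬ Bead lam w) ∧
      ∃ nu : YoungDiagram, nu.cells = lam.cells \ s ∧
        (∀ x, Bead nu x ↔ ((Bead lam x ∧ x ≠ t) ∨ x = t - l)) ∧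
        nu.cells.card + l = lam.cells.card := by
  obtain ⟨r, rfl⟩ := hb
  obtain ⟨mu, R, s, hstruct, hfb, hsdef, hmucells, hhook, hhoriz⟩ := construct hl lam r hg
  refine ⟨s, hhook, ?_, mu, hmucells, ?_, ?_⟩
  · rw [hhoriz]; exact no_between_iff hl hstruct hfb
  · intro x
    rw [hstruct.bead_desc x, hfb]
  · have hsub := hstruct.cells_sub
    have := Finset.card_sdiff_add_card_eq_card hsub
    rw [← hsdef] at this
    have hcard : s.card = l := by
      have h1 := hstruct.card_sdiff_eq
      rw [hfb, ← hsdef] at h1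
      omega
    omega


/-! ### Star condition: bead-level consequences -/

theorem starB_no_between {l : ℕ} (hl : 1 ≤ l) {lam : YoungDiagram}
    (hstar : StarB l lam) {t : ℤ} (hb : Bead lam t) (hg : ¬ Bead lam (t - l)) :
    ∀ w : ℤ, t - l < w → w < t → ¬ Bead lam w := by
  intro w h1 h2 hw
  have hl0 : (0:ℤ) < l := by exact_mod_cast hl
  have := hstar (t - l) t w hg hb hw (by omega) (by omega)
  have hdvd : (l:ℤ) ∣ t - (t - l) := ⟨1, by ring⟩
  have hwd : (l:ℤ) ∣ w - (t - l) := this.mp hdvd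
  have := Int.le_of_dvd (by omega) hwd
  omega

theorem starB_preserved {l : ℕ} (hl : 1 ≤ l) {lam nu : YoungDiagram} {t : ℤ}
    (hstar : StarB l lam) (ht : Bead lam t) (hgap : ¬ Bead lam (t - l))
    (hdesc : ∀ x, Bead nu x ↔ ((Bead lam x ∧ x ≠ t) ∨ x = t - l)) :
    StarB l nu := by
  intro g x y hg hx hy hgx hgy
  have hl0 : (0:ℤ) < l := by exact_mod_cast hl
  by_cases hgt : g = t
  · -- new gap at t; all lam-beads above t - l are ≡ t - l
    subst hgt
    have key : ∀ w, Bead nu w → g < w → (l:ℤ) ∣ w - g := by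
      intro w hw hgw
      have hw' : Bead lam w := by
        rcases (hdesc w).mp hw with ⟨h1, _⟩ | rfl
        · exact h1
        · omega
      have := hstar (g - l) w g hgap hw' ht (by omega) (by omega)
      have hdvd : (l:ℤ) ∣ g - (g - l) := ⟨1, by ring⟩
      have h2 : (l:ℤ) ∣ w - (g - l) := this.mpr hdvd
      obtain ⟨k, hk⟩ := h2
      exact ⟨k - 1, by rw [mul_sub, mul_one]; omega⟩
    exact iff_of_true (key x hx hgx) (key y hy hgy)
  · -- g is also a gap of lam
    have hg' : ¬ Bead lam g := by
      intro hbg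
      exact hg ((hdesc g).mpr (Or.inl ⟨hbg, hgt⟩))
    have key : ∀ w, Bead nu w → g < w →
        ∃ w', Bead lam w' ∧ g < w' ∧ ((l:ℤ) ∣ w - g ↔ (l:ℤ) ∣ w' - g) := by
      intro w hw hgw
      rcases (hdesc w).mp hw with ⟨h1, _⟩ | rfl
      · exact ⟨w, h1, hgw, Iff.rfl⟩
      · refine ⟨t, ht, by omega, ?_⟩
        constructor
        · rintro ⟨k, hk⟩; exact ⟨k + 1, by rw [mul_add, mul_one]; omega⟩
        · rintro ⟨k, hk⟩; exact ⟨k - 1, by rw [mul_sub, mul_one]; omega⟩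
    obtain ⟨x', hx', hgx', hiffx⟩ := key x hx hgx
    obtain ⟨y', hy', hgy', hiffy⟩ := key y hy hgy
    rw [hiffx, hiffy]
    exact hstar g x' y' hg' hx' hy' hgx' hgy'


/-! ### The main induction: an ℓ-partition satisfies the star condition -/

theorem ell_imp_starB {l : ℕ} (hl : 1 ≤ l) {lam : YoungDiagram}
    (hell : ∀ μ, Relation.ReflTransGen (RemoveHorizHook l) lam μ →
      ∀ s, IsRemovableRimHook l μ s → HorizontalCells s) :
    StarB l lam := by
  classical
  have hl0 : (0:ℤ) < l := by exact_mod_cast hl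
  have H : ∀ μ, Relation.ReflTransGen (RemoveHorizHook l) lam μ →
      ∀ t : ℤ, Bead μ t → ¬ Bead μ (t - l) → ∀ w, t - l < w → w < t → ¬ Bead μ w := by
    intro μ hr t hb hg
    obtain ⟨s, hook, hiff, _⟩ := hook_construct hl hb hg
    exact hiff.mp (hell μ hr s hook)
  have Move : ∀ μ, Relation.ReflTransGen (RemoveHorizHook l) lam μ →
      ∀ t : ℤ, Bead μ t → ¬ Bead μ (t - l) →
      ∃ ν : YoungDiagram, Relation.ReflTransGen (RemoveHorizHook l) lam ν ∧
        ν.cells.card + l = μ.cells.card ∧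
        ∀ x, Bead ν x ↔ ((Bead μ x ∧ x ≠ t) ∨ x = t - l) := by
    intro μ hr t hb hg
    obtain ⟨s, hook, hiff, nu, hcells, hdesc, hcard⟩ := hook_construct hl hb hg
    exact ⟨nu, hr.tail ⟨s, hook, hell μ hr s hook, hcells⟩, hcard, hdesc⟩
  have main : ∀ n μ, μ.cells.card = n →
      Relation.ReflTransGen (RemoveHorizHook l) lam μ →
      ∀ g x y : ℤ, ¬ Bead μ g → Bead μ x → Bead μ y → g < x → g < y →
        (l:ℤ) ∣ x - g → ¬ (l:ℤ) ∣ y - g → False := by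
    intro n
    induction n using Nat.strong_induction_on with
    | _ n IH =>
      intro μ hcard hreach g x y hg hx hy hgx hgy hdx hdy
      obtain ⟨m, hm⟩ := hdx
      have hm1 : 1 ≤ m := by
        by_contra hc
        push_neg at hc
        have : (l:ℤ) * m ≤ 0 := mul_nonpos_of_nonneg_of_nonpos hl0.le (by omega)
        omega
      set m' := m.toNat with hm'def
      have hmm : (m' : ℤ) = m := Int.toNat_of_nonneg (by omega)
      have hm'1 : 1 ≤ m' := by omega
      set P : ℕ → Prop := fun j => ¬ Bead μ (g + l * (j:ℤ)) with hP
      have hP0 : P 0 := by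
        show ¬ Bead μ (g + l * ((0:ℕ):ℤ))
        have he : g + l * ((0:ℕ):ℤ) = g := by push_cast; ring
        rw [he]; exact hg
      set J := Nat.findGreatest P (m' - 1) with hJdef
      have hJP : P J := Nat.findGreatest_spec (Nat.zero_le _) hP0
      have hJle : J ≤ m' - 1 := Nat.findGreatest_le _
      have hJmax : ∀ j, J < j → j ≤ m' - 1 → ¬ P j :=
        fun j h1 h2 => Nat.findGreatest_is_greatest h1 h2
      set p := g + l * (J:ℤ) with hpdef
      set t := p + l with htdef
      have hJm : (J:ℤ) + 1 ≤ m := by omega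
      have htx : t ≤ x := by
        have h2 : (l:ℤ) * ((J:ℤ)+1) ≤ l * m := mul_le_mul_of_nonneg_left hJm hl0.le
        rw [mul_add, mul_one] at h2
        omega
      have hbt : Bead μ t := by
        rcases Nat.lt_or_ge J (m' - 1) with hJlt | hJge
        · have hnp := hJmax (J+1) (by omega) (by omega)
          have hb : Bead μ (g + l * ((J+1 : ℕ):ℤ)) := not_not.mp hnp
          have he : g + l * ((J+1 : ℕ):ℤ) = t := by push_cast; rw [htdef, hpdef]; ring
          rwa [he] at hb
        · have hJeq : J = m' - 1 := by omega
          have hc : ((J:ℕ):ℤ) = m - 1 := by omega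
          have he : t = x := by
            rw [htdef, hpdef, hc]
            have : g + l * (m - 1) + l = g + l * m := by ring
            omega
          rwa [he]
      have hpgap : ¬ Bead μ p := hJP
      have hbetween : ∀ w, p < w → w < t → ¬ Bead μ w := by
        intro w h1 h2
        exact H μ hreach t hbt (by rw [show t - (l:ℤ) = p by omega]; exact hpgap) w (by omega) h2
      obtain ⟨ν, hreachν, hcardν, hdesc⟩ :=
        Move μ hreach t hbt (by rw [show t - (l:ℤ) = p by omega]; exact hpgap)
      have hgp : g ≤ p := by
        have : (0:ℤ) ≤ l * (J:ℤ) := mul_nonneg hl0.le (by positivity)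
        omega
      have hcard' : ν.cells.card < n := by omega
      have hyt : y ≠ t := by
        intro h
        exact hdy ⟨(J:ℤ)+1, by rw [h, htdef, hpdef]; ring⟩
      have hgnu : g ≠ t - l → ¬ Bead ν g := by
        intro hne hb
        rcases (hdesc g).mp hb with ⟨h1, _⟩ | h1
        · exact hg h1
        · exact hne h1
      rcases lt_or_eq_of_le hgp with hgplt | hgpeq
      · -- the chosen runner gap p is above g
        by_cases hxt : x = t
        · exact IH _ hcard' ν rfl hreachν g p y
            (hgnu (by omega)) ((hdesc p).mpr (Or.inr (by omega)))
            ((hdesc y).mpr (Or.inl ⟨hy, hyt⟩)) hgplt hgy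
            ⟨(J:ℤ), by rw [hpdef]; ring⟩ hdy
        · exact IH _ hcard' ν rfl hreachν g x y
            (hgnu (by omega)) ((hdesc x).mpr (Or.inl ⟨hx, hxt⟩))
            ((hdesc y).mpr (Or.inl ⟨hy, hyt⟩)) hgx hgy ⟨m, hm⟩ hdy
      · -- p = g, so t = g + l
        have htgl : t = g + l := by omega
        have hyget : t < y := by
          rcases lt_trichotomy y t with h | h | h
          · exact absurd hy (hbetween y (by omega) h)
          · exact absurd h hyt
          · exact h
        by_cases hxt : x = t
        · by_cases hc1 : ∃ z, Bead μ z ∧ x < z ∧ (l:ℤ) ∣ z - g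
          · obtain ⟨z, hz, hxz, hdz⟩ := hc1
            obtain ⟨k, hk⟩ := hdz
            refine IH _ hcard' ν rfl hreachν x z y ?_ ?_ ?_ hxz (by omega) ?_ ?_
            · intro hb
              rcases (hdesc x).mp hb with ⟨_, hne⟩ | h1
              · exact hne hxt
              · omega
            · exact (hdesc z).mpr (Or.inl ⟨hz, by omega⟩)
            · exact (hdesc y).mpr (Or.inl ⟨hy, hyt⟩)
            · exact ⟨k - m, by rw [mul_sub]; omega⟩
            · rintro ⟨k', hk'⟩
              exact hdy ⟨k' + m, by rw [mul_add]; omega⟩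
          · push_neg at hc1
            have hyx : x < y := by omega
            set Q : ℕ → Prop := fun k => Bead μ (x + 1 + (k:ℤ)) with hQ
            have hQex : ∃ k, Q k := by
              refine ⟨(y - x - 1).toNat, ?_⟩
              show Bead μ (x + 1 + (((y - x - 1).toNat : ℕ):ℤ))
              have he : x + 1 + (((y - x - 1).toNat : ℕ):ℤ) = y := by omega
              rw [he]; exact hy
            set k0 := Nat.find hQex with hk0
            set v := x + 1 + (k0:ℤ) with hv0
            have hv : Bead μ v := Nat.find_spec hQex
            have hvmin : ∀ w, x < w → w < v → ¬ Bead μ w := by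
              intro w h1 h2 hbw
              have hlt : (w - x - 1).toNat < k0 := by omega
              refine Nat.find_min hQex hlt ?_
              show Bead μ (x + 1 + (((w - x - 1).toNat : ℕ):ℤ))
              have he : x + 1 + (((w - x - 1).toNat : ℕ):ℤ) = w := by omega
              rw [he]; exact hbw
            have hdv : ¬ (l:ℤ) ∣ v - g := hc1 v hv (by omega)
            rcases lt_trichotomy v (x + l) with hvl | hvl | hvl
            · -- v close: the bead x sits inside the hook of v — contradiction
              have hgapvl : ¬ Bead μ (v - l) := by
                intro hb
                exact (hbetween (v - l) (by omega) (by omega)) hb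
              exact H μ hreach v hv hgapvl x (by omega) (by omega) hx
            · exact hdv ⟨m + 1, by rw [mul_add, mul_one]; omega⟩
            · have hgapvl : ¬ Bead μ (v - l) := hvmin (v - l) (by omega) (by omega)
              obtain ⟨ν₂, hreachν₂, hcardν₂, hdesc₂⟩ := Move μ hreach v hv hgapvl
              refine IH _ (by omega) ν₂ rfl hreachν₂ g x (v - l) ?_ ?_ ?_ hgx (by omega) ⟨m, hm⟩ ?_
              · intro hb
                rcases (hdesc₂ g).mp hb with ⟨h1, _⟩ | h1
                · exact hg h1
                · omega
              · exact (hdesc₂ x).mpr (Or.inl ⟨hx, by omega⟩)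
              · exact (hdesc₂ (v - l)).mpr (Or.inr rfl)
              · rintro ⟨k', hk'⟩
                exact hdv ⟨k' + 1, by rw [mul_add, mul_one]; omega⟩
        · -- x is strictly above t
          have htxlt : t < x := lt_of_le_of_ne htx (Ne.symm hxt)
          refine IH _ hcard' ν rfl hreachν t x y ?_ ?_ ?_ htxlt hyget ?_ ?_
          · intro hb
            rcases (hdesc t).mp hb with ⟨_, hne⟩ | h1
            · exact hne rfl
            · omega
          · exact (hdesc x).mpr (Or.inl ⟨hx, hxt⟩)
          · exact (hdesc y).mpr (Or.inl ⟨hy, hyt⟩)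
          · refine ⟨m - (J:ℤ) - 1, ?_⟩
            rw [mul_sub, mul_sub, mul_one]
            rw [htdef, hpdef]
            omega
          · rintro ⟨k', hk'⟩
            refine hdy ⟨k' + (J:ℤ) + 1, ?_⟩
            rw [mul_add, mul_add, mul_one]
            rw [htdef, hpdef] at hk'
            omega
  intro g x y hg hx hy hgx hgy
  constructor
  · intro hdx
    by_contra hdy
    exact main lam.cells.card lam rfl Relation.ReflTransGen.refl g x y hg hx hy hgx hgy hdx hdy
  · intro hdy
    by_contra hdx
    exact main lam.cells.card lam rfl Relation.ReflTransGen.refl g y x hg hy hx hgy hgx hdy hdx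


theorem starB_reach {l : ℕ} (hl : 1 ≤ l) {lam μ : YoungDiagram} (hstar : StarB l lam)
    (h : Relation.ReflTransGen (RemoveHorizHook l) lam μ) : StarB l μ := by
  induction h with
  | refl => exact hstar
  | tail _ hbc ih =>
    rename_i b c _
    obtain ⟨s, hook, horiz, hcells⟩ := hbc
    obtain ⟨t, hbt, hgt, hiff, hdesc⟩ := hook_classify hl hook
    exact starB_preserved hl ih hbt hgt (hdesc c hcells).1

end EllAux

/-- An `ℓ`-regular partition is an `ℓ`-partition if and only if it satisfies
Carter's condition (⋆). -/
theorem stmt_6 (ℓ : ℕ) (hℓ : 2 ≤ ℓ) (lam : YoungDiagram) (hreg : Regular ℓ lam) :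
    IsEllPartition ℓ lam ↔ StarCond ℓ lam := by
  have hl : 1 ≤ ℓ := by omega
  constructor
  · intro hell
    exact (EllAux.starCond_iff_starB ℓ lam).mpr (EllAux.ell_imp_starB hl hell.2)
  · intro hstar
    refine ⟨hreg, ?_⟩
    intro μ hreach s hook
    have hsB := EllAux.starB_reach hl ((EllAux.starCond_iff_starB ℓ lam).mp hstar) hreach
    obtain ⟨t, hbt, hgt, hiff, _⟩ := EllAux.hook_classify hl hook
    exact hiff.mpr (EllAux.starB_no_between hl hsB hbt hgt)
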